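/- (The heat evolution solves the heat equation.) Let c > 0 and let f : ℝ → ℝ be bounded and continuous. Define Φ(t,x) = ∫_ℝ f(y)·(4πct)^(−1/2)·exp(−(x−y)²/(4ct)) dy for t > 0 and x ∈ ℝ. Then for every t > 0 and x ∈ ℝ, the section s ↦ Φ(s,x) is differentiable at t, the section y ↦ Φ(t,y) is twice differentiable at x, and ∂Φ/∂t(t,x) = c·∂²Φ/∂x²(t,x). -/

import Mathlib

open MeasureTheory Real

/-- The heat evolution `Φ(t,x) = ∫ f(y)·(4πct)^(−1/2)·exp(−(x−y)²/(4ct)) dy`. -/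
noncomputable def heatEvol (c : ℝ) (f : ℝ → ℝ) (t x : ℝ) : ℝ :=
  ∫ y : ℝ, f y * ((4 * π * c * t) ^ (-(1 : ℝ) / 2)
    * Real.exp (-(x - y) ^ 2 / (4 * c * t)))

noncomputable def hK (c t x : ℝ) : ℝ :=
  (4 * π * c * t) ^ (-(1 : ℝ) / 2) * Real.exp (-x ^ 2 / (4 * c * t))

noncomputable def hK1 (c t x : ℝ) : ℝ := hK c t x * (-x / (2 * c * t))

noncomputable def hK2 (c t x : ℝ) : ℝ :=
  hK c t x * (x ^ 2 / (4 * c ^ 2 * t ^ 2) - 1 / (2 * c * t))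

lemma fourπct_pos {c t : ℝ} (hc : 0 < c) (ht : 0 < t) : 0 < 4 * π * c * t := by
  have := pi_pos; positivity

lemma hK_pos {c t : ℝ} (hc : 0 < c) (ht : 0 < t) (x : ℝ) : 0 < hK c t x := by
  unfold hK
  have h := fourπct_pos hc ht
  positivity

lemma hasDerivAt_hK_x {c t : ℝ} (hc : 0 < c) (ht : 0 < t) (x : ℝ) :
    HasDerivAt (fun x => hK c t x) (hK1 c t x) x := by
  have h1 : HasDerivAt (fun x : ℝ => -x ^ 2 / (4 * c * t))
      (-(2 * x) / (4 * c * t)) x := by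
    simpa using ((hasDerivAt_pow 2 x).neg.div_const (4 * c * t))
  have h2 := (h1.exp).const_mul ((4 * π * c * t) ^ (-(1 : ℝ) / 2))
  refine (h2 : HasDerivAt (fun x => hK c t x) _ x).congr_deriv (Eq.symm ?_)
  unfold hK1 hK
  have hct : (2 * c * t) ≠ 0 := by positivity
  field_simp
  ring

lemma hasDerivAt_hK1_x {c t : ℝ} (hc : 0 < c) (ht : 0 < t) (x : ℝ) :
    HasDerivAt (fun x => hK1 c t x) (hK2 c t x) x := by
  have h1 : HasDerivAt (fun x : ℝ => -x / (2 * c * t)) (-1 / (2 * c * t)) x := by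
    simpa using ((hasDerivAt_id x).neg.div_const (2 * c * t))
  have h2 := (hasDerivAt_hK_x hc ht x).mul h1
  refine (h2 : HasDerivAt (fun x => hK1 c t x) _ x).congr_deriv (Eq.symm ?_)
  unfold hK2 hK1
  have hct : (2 * c * t) ≠ 0 := by positivity
  field_simp
  ring

lemma hasDerivAt_hK_t {c : ℝ} (hc : 0 < c) {t : ℝ} (ht : 0 < t) (x : ℝ) :
    HasDerivAt (fun s => hK c s x) (c * hK2 c t x) t := by
  have hB : 0 < 4 * π * c * t := fourπct_pos hc ht
  have hlin : HasDerivAt (fun s : ℝ => 4 * π * c * s) (4 * π * c) t := by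
    simpa using (hasDerivAt_id t).const_mul (4 * π * c)
  have hp : HasDerivAt (fun s : ℝ => (4 * π * c * s) ^ (-(1 : ℝ) / 2))
      ((-(1 : ℝ) / 2 * (4 * π * c * t) ^ (-(1 : ℝ) / 2 - 1)) * (4 * π * c)) t :=
    (Real.hasDerivAt_rpow_const (Or.inl hB.ne')).comp t hlin
  have hinner : HasDerivAt (fun s : ℝ => -x ^ 2 / (4 * c * s))
      ((-x ^ 2 / (4 * c)) * (-(t ^ 2)⁻¹)) t := by
    have h0 : (fun s : ℝ => -x ^ 2 / (4 * c * s))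
        = fun s : ℝ => (-x ^ 2 / (4 * c)) * s⁻¹ := by
      funext s
      ring
    rw [h0]
    exact (hasDerivAt_inv ht.ne').const_mul _
  have hq := hinner.exp
  have h := hp.mul hq
  refine (h : HasDerivAt (fun s => hK c s x) _ t).congr_deriv (Eq.symm ?_)
  have hsub : (4 * π * c * t) ^ (-(1 : ℝ) / 2 - 1)
      = (4 * π * c * t) ^ (-(1 : ℝ) / 2) / (4 * π * c * t) := by
    rw [Real.rpow_sub hB, Real.rpow_one]
  rw [hsub]
  unfold hK2 hK
  have hπ := pi_pos
  field_simp
  ring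

lemma cont_hK {c t : ℝ} (x : ℝ) : Continuous fun y : ℝ => hK c t (x - y) := by
  unfold hK; fun_prop

lemma cont_hK1 {c t : ℝ} (x : ℝ) : Continuous fun y : ℝ => hK1 c t (x - y) := by
  unfold hK1 hK; fun_prop

lemma cont_hK2 {c t : ℝ} (x : ℝ) : Continuous fun y : ℝ => hK2 c t (x - y) := by
  unfold hK2 hK; fun_prop

lemma integ_one_abs {b : ℝ} (hb : 0 < b) (x₀ : ℝ) :
    Integrable fun y : ℝ => (1 + |x₀ - y|) * Real.exp (-b * (x₀ - y) ^ 2) := by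
  refine (integrable_comp_sub_left (fun w : ℝ => (1 + |w|) * Real.exp (-b * w ^ 2)) x₀).mpr ?_
  have h1 := integrable_exp_neg_mul_sq hb
  have h2 : Integrable fun w : ℝ => |w| * Real.exp (-b * w ^ 2) := by
    have := (integrable_mul_exp_neg_mul_sq hb).abs
    simpa [abs_mul, abs_of_pos (exp_pos _)] using this
  simpa [add_mul, Pi.add_def] using h1.add h2

lemma integ_one_sq {b : ℝ} (hb : 0 < b) (x₀ : ℝ) :
    Integrable fun y : ℝ => (1 + (x₀ - y) ^ 2) * Real.exp (-b * (x₀ - y) ^ 2) := by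
  refine (integrable_comp_sub_left
    (fun w : ℝ => (1 + w ^ 2) * Real.exp (-b * w ^ 2)) x₀).mpr ?_
  have h1 := integrable_exp_neg_mul_sq hb
  have h3 : Integrable fun w : ℝ => w ^ 2 * Real.exp (-b * w ^ 2) := by
    have := integrable_rpow_mul_exp_neg_mul_sq hb (s := 2) (by norm_num)
    simpa [Real.rpow_two] using this
  simpa [add_mul, Pi.add_def] using h1.add h3

/-- key exponential estimate -/
lemma key_est {c t : ℝ} (hc : 0 < c) (ht : 0 < t) {x₀ x : ℝ} (hx : |x - x₀| ≤ 1) (y : ℝ) :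
    Real.exp (-(x - y) ^ 2 / (4 * c * t))
      ≤ Real.exp (1 / (4 * c * t)) * Real.exp (-(1 / (8 * c * t)) * (x₀ - y) ^ 2) := by
  rw [← Real.exp_add]
  apply Real.exp_le_exp.mpr
  have hct : 0 < 4 * c * t := by positivity
  have habs : (x - x₀) ^ 2 ≤ 1 := by
    have := abs_le.mp hx
    nlinarith
  have hkey : (x₀ - y) ^ 2 / 2 - 1 ≤ (x - y) ^ 2 := by
    nlinarith [sq_nonneg ((x - y) - (x₀ - x))]
  have heq : 1 / (4 * c * t) + -(1 / (8 * c * t)) * (x₀ - y) ^ 2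
      = (1 - (x₀ - y) ^ 2 / 2) / (4 * c * t) := by
    field_simp
    ring
  rw [heq]
  gcongr ?_ / _
  linarith

lemma sq_shift_est {x₀ x y : ℝ} (hx : |x - x₀| ≤ 1) :
    (x - y) ^ 2 ≤ 2 + 2 * (x₀ - y) ^ 2 := by
  have := abs_le.mp hx
  nlinarith [sq_nonneg ((x - x₀) - (x₀ - y))]

section main
variable {c : ℝ} {f : ℝ → ℝ} {C : ℝ}

lemma integrable_main (hc : 0 < c) {t : ℝ} (ht : 0 < t) (hfc : Continuous f)
    (hC : ∀ x, |f x| ≤ C) (x : ℝ) :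
    Integrable fun y : ℝ => f y * hK c t (x - y) := by
  have hC0 : 0 ≤ C := (abs_nonneg _).trans (hC 0)
  have hb : 0 < 1 / (4 * c * t) := by positivity
  have hπ := pi_pos
  have base : Integrable fun y : ℝ =>
      (C * (4 * π * c * t) ^ (-(1 : ℝ) / 2)) * Real.exp (-(1 / (4 * c * t)) * (x - y) ^ 2) :=
    ((integrable_comp_sub_left
      (fun w : ℝ => Real.exp (-(1 / (4 * c * t)) * w ^ 2)) x).mpr
        (integrable_exp_neg_mul_sq hb)).const_mul _
  refine base.mono' (hfc.mul (cont_hK x)).aestronglyMeasurable ?_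
  refine Filter.Eventually.of_forall fun y => ?_
  have hKpos := hK_pos hc ht (x - y)
  rw [Real.norm_eq_abs, abs_mul, abs_of_pos hKpos]
  have hKeq : hK c t (x - y)
      = (4 * π * c * t) ^ (-(1 : ℝ) / 2) * Real.exp (-(1 / (4 * c * t)) * (x - y) ^ 2) := by
    unfold hK; congr 2; ring
  rw [hKeq, ← mul_assoc]
  gcongr
  exact hC y

lemma hasDerivAt_int_x (hc : 0 < c) {t : ℝ} (ht : 0 < t) (hfc : Continuous f)
    (hC : ∀ x, |f x| ≤ C) (x₀ : ℝ) :
    Integrable (fun y : ℝ => f y * hK1 c t (x₀ - y)) ∧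
    HasDerivAt (fun x => ∫ y : ℝ, f y * hK c t (x - y))
      (∫ y : ℝ, f y * hK1 c t (x₀ - y)) x₀ := by
  have hC0 : 0 ≤ C := (abs_nonneg _).trans (hC 0)
  have hπ := pi_pos
  have hb : 0 < 1 / (8 * c * t) := by positivity
  refine hasDerivAt_integral_of_dominated_loc_of_deriv_le (s := Metric.ball x₀ 1)
    (F := fun x y => f y * hK c t (x - y)) (F' := fun x y => f y * hK1 c t (x - y))
    (bound := fun y => (C * ((4 * π * c * t) ^ (-(1 : ℝ) / 2) * Real.exp (1 / (4 * c * t)) / (2 * c * t)))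
      * ((1 + |x₀ - y|) * Real.exp (-(1 / (8 * c * t)) * (x₀ - y) ^ 2)))
    (Metric.ball_mem_nhds x₀ one_pos)
    (Filter.Eventually.of_forall fun x => (hfc.mul (cont_hK x)).aestronglyMeasurable)
    (integrable_main hc ht hfc hC x₀)
    (hfc.mul (cont_hK1 x₀)).aestronglyMeasurable
    (Filter.Eventually.of_forall fun y => fun x hx => ?_)
    ((integ_one_abs hb x₀).const_mul _)
    (Filter.Eventually.of_forall fun y => fun x _ => ?_)
  · -- the bound
    have hx' : |x - x₀| ≤ 1 := by
      rw [Metric.mem_ball, Real.dist_eq] at hx; exact hx.le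
    have h2ct : (0 : ℝ) < 2 * c * t := by positivity
    have h1 : ‖f y * hK1 c t (x - y)‖
        = |f y| * ((4 * π * c * t) ^ (-(1 : ℝ) / 2) * Real.exp (-(x - y) ^ 2 / (4 * c * t))
          * (|x - y| / (2 * c * t))) := by
      rw [Real.norm_eq_abs, abs_mul]
      congr 1
      unfold hK1
      rw [abs_mul, abs_of_pos (hK_pos hc ht _), abs_div, abs_neg, abs_of_pos h2ct]
      unfold hK
      rfl
    rw [h1]
    calc |f y| * ((4 * π * c * t) ^ (-(1 : ℝ) / 2) * Real.exp (-(x - y) ^ 2 / (4 * c * t))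
          * (|x - y| / (2 * c * t)))
        ≤ C * ((4 * π * c * t) ^ (-(1 : ℝ) / 2)
            * (Real.exp (1 / (4 * c * t)) * Real.exp (-(1 / (8 * c * t)) * (x₀ - y) ^ 2))
            * ((1 + |x₀ - y|) / (2 * c * t))) := by
          gcongr
          · exact hC y
          · exact key_est hc ht hx' y
          · calc |x - y| = |(x - x₀) + (x₀ - y)| := by ring_nf
              _ ≤ |x - x₀| + |x₀ - y| := abs_add_le _ _
              _ ≤ 1 + |x₀ - y| := by linarith
      _ = (C * ((4 * π * c * t) ^ (-(1 : ℝ) / 2) * Real.exp (1 / (4 * c * t)) / (2 * c * t)))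
            * ((1 + |x₀ - y|) * Real.exp (-(1 / (8 * c * t)) * (x₀ - y) ^ 2)) := by ring
  · -- differentiability
    have := ((hasDerivAt_hK_x hc ht (x - y)).comp x ((hasDerivAt_id x).sub_const y))
    simpa using this.const_mul (f y)

lemma hasDerivAt_int_xx (hc : 0 < c) {t : ℝ} (ht : 0 < t) (hfc : Continuous f)
    (hC : ∀ x, |f x| ≤ C) (x₀ : ℝ) :
    HasDerivAt (fun x => ∫ y : ℝ, f y * hK1 c t (x - y))
      (∫ y : ℝ, f y * hK2 c t (x₀ - y)) x₀ := by
  have hC0 : 0 ≤ C := (abs_nonneg _).trans (hC 0)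
  have hπ := pi_pos
  have hb : 0 < 1 / (8 * c * t) := by positivity
  refine (hasDerivAt_integral_of_dominated_loc_of_deriv_le (s := Metric.ball x₀ 1)
    (F := fun x y => f y * hK1 c t (x - y)) (F' := fun x y => f y * hK2 c t (x - y))
    (bound := fun y => (C * ((4 * π * c * t) ^ (-(1 : ℝ) / 2) * Real.exp (1 / (4 * c * t))
        * (2 / (4 * c ^ 2 * t ^ 2) + 1 / (2 * c * t))))
      * ((1 + (x₀ - y) ^ 2) * Real.exp (-(1 / (8 * c * t)) * (x₀ - y) ^ 2)))
    (Metric.ball_mem_nhds x₀ one_pos)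
    (Filter.Eventually.of_forall fun x => (hfc.mul (cont_hK1 x)).aestronglyMeasurable)
    (hasDerivAt_int_x hc ht hfc hC x₀).1
    (hfc.mul (cont_hK2 x₀)).aestronglyMeasurable
    (Filter.Eventually.of_forall fun y => fun x hx => ?_)
    ((integ_one_sq hb x₀).const_mul _)
    (Filter.Eventually.of_forall fun y => fun x _ => ?_)).2
  · -- the bound
    have hx' : |x - x₀| ≤ 1 := by
      rw [Metric.mem_ball, Real.dist_eq] at hx; exact hx.le
    have h2ct : (0 : ℝ) < 2 * c * t := by positivity
    have h4ct : (0 : ℝ) < 4 * c ^ 2 * t ^ 2 := by positivity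
    have h1 : ‖f y * hK2 c t (x - y)‖
        = |f y| * ((4 * π * c * t) ^ (-(1 : ℝ) / 2) * Real.exp (-(x - y) ^ 2 / (4 * c * t))
          * |(x - y) ^ 2 / (4 * c ^ 2 * t ^ 2) - 1 / (2 * c * t)|) := by
      rw [Real.norm_eq_abs, abs_mul]
      congr 1
      unfold hK2
      rw [abs_mul, abs_of_pos (hK_pos hc ht _)]
      unfold hK
      rfl
    have hdiff : |(x - y) ^ 2 / (4 * c ^ 2 * t ^ 2) - 1 / (2 * c * t)|
        ≤ (1 + (x₀ - y) ^ 2) * (2 / (4 * c ^ 2 * t ^ 2) + 1 / (2 * c * t)) := by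
      refine (abs_sub _ _).trans ?_
      rw [abs_of_nonneg (by positivity), abs_of_nonneg (by positivity)]
      have hsq := sq_shift_est hx' (y := y)
      have ha : (0 : ℝ) ≤ (4 * c ^ 2 * t ^ 2)⁻¹ := by positivity
      have hb' : (0 : ℝ) ≤ (2 * c * t)⁻¹ := by positivity
      simp only [div_eq_mul_inv, one_mul]
      nlinarith [mul_nonneg (sq_nonneg (x₀ - y)) ha, mul_nonneg (sq_nonneg (x₀ - y)) hb',
        mul_nonneg (sub_nonneg.mpr hsq) ha]
    rw [h1]
    calc |f y| * ((4 * π * c * t) ^ (-(1 : ℝ) / 2) * Real.exp (-(x - y) ^ 2 / (4 * c * t))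
          * |(x - y) ^ 2 / (4 * c ^ 2 * t ^ 2) - 1 / (2 * c * t)|)
        ≤ C * ((4 * π * c * t) ^ (-(1 : ℝ) / 2)
            * (Real.exp (1 / (4 * c * t)) * Real.exp (-(1 / (8 * c * t)) * (x₀ - y) ^ 2))
            * ((1 + (x₀ - y) ^ 2) * (2 / (4 * c ^ 2 * t ^ 2) + 1 / (2 * c * t)))) := by
          gcongr
          · exact hC y
          · exact key_est hc ht hx' y
      _ = (C * ((4 * π * c * t) ^ (-(1 : ℝ) / 2) * Real.exp (1 / (4 * c * t))
            * (2 / (4 * c ^ 2 * t ^ 2) + 1 / (2 * c * t))))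
          * ((1 + (x₀ - y) ^ 2) * Real.exp (-(1 / (8 * c * t)) * (x₀ - y) ^ 2)) := by ring
  · -- differentiability
    have := ((hasDerivAt_hK1_x hc ht (x - y)).comp x ((hasDerivAt_id x).sub_const y))
    simpa using this.const_mul (f y)

lemma hasDerivAt_int_t (hc : 0 < c) {t₀ : ℝ} (ht : 0 < t₀) (hfc : Continuous f)
    (hC : ∀ x, |f x| ≤ C) (x : ℝ) :
    HasDerivAt (fun s => ∫ y : ℝ, f y * hK c s (x - y))
      (∫ y : ℝ, f y * (c * hK2 c t₀ (x - y))) t₀ := by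
  have hC0 : 0 ≤ C := (abs_nonneg _).trans (hC 0)
  have hπ := pi_pos
  have hb : 0 < 1 / (6 * c * t₀) := by positivity
  refine (hasDerivAt_integral_of_dominated_loc_of_deriv_le (s := Metric.ball t₀ (t₀ / 2))
    (F := fun s y => f y * hK c s (x - y)) (F' := fun s y => f y * (c * hK2 c s (x - y)))
    (bound := fun y => (C * (c * ((2 * π * c * t₀) ^ (-(1 : ℝ) / 2)
        * (1 / (c ^ 2 * t₀ ^ 2) + 1 / (c * t₀)))))
      * ((1 + (x - y) ^ 2) * Real.exp (-(1 / (6 * c * t₀)) * (x - y) ^ 2)))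
    (Metric.ball_mem_nhds t₀ (by positivity))
    (Filter.Eventually.of_forall fun s => (hfc.mul (cont_hK x)).aestronglyMeasurable)
    (integrable_main hc ht hfc hC x)
    (hfc.mul ((continuous_const.mul (cont_hK2 x)))).aestronglyMeasurable
    (Filter.Eventually.of_forall fun y => fun s hs => ?_)
    ((integ_one_sq hb x).const_mul _)
    (Filter.Eventually.of_forall fun y => fun s hs => ?_)).2
  · -- the bound
    have hs' : t₀ / 2 < s ∧ s < 3 * t₀ / 2 := by
      rw [Metric.mem_ball, Real.dist_eq] at hs
      constructor <;> nlinarith [abs_lt.mp hs]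
    obtain ⟨hs1, hs2⟩ := hs'
    have hs0 : 0 < s := by linarith
    have h2cs : (0 : ℝ) < 2 * c * s := by positivity
    have h1 : ‖f y * (c * hK2 c s (x - y))‖
        = |f y| * (c * ((4 * π * c * s) ^ (-(1 : ℝ) / 2) * Real.exp (-(x - y) ^ 2 / (4 * c * s))
          * |(x - y) ^ 2 / (4 * c ^ 2 * s ^ 2) - 1 / (2 * c * s)|)) := by
      rw [Real.norm_eq_abs, abs_mul, abs_mul, abs_of_pos hc]
      congr 2
      unfold hK2
      rw [abs_mul, abs_of_pos (hK_pos hc hs0 _)]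
      unfold hK
      rfl
    have hA : (4 * π * c * s) ^ (-(1 : ℝ) / 2) ≤ (2 * π * c * t₀) ^ (-(1 : ℝ) / 2) := by
      refine Real.rpow_le_rpow_of_nonpos (by positivity) (by nlinarith [mul_pos hπ hc]) (by norm_num)
    have hE : Real.exp (-(x - y) ^ 2 / (4 * c * s))
        ≤ Real.exp (-(1 / (6 * c * t₀)) * (x - y) ^ 2) := by
      apply Real.exp_le_exp.mpr
      rw [neg_div, neg_mul, neg_le_neg_iff, mul_comm, mul_one_div]
      exact div_le_div_of_nonneg_left (sq_nonneg _) (by positivity) (by nlinarith)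
    have hdiff : |(x - y) ^ 2 / (4 * c ^ 2 * s ^ 2) - 1 / (2 * c * s)|
        ≤ (1 + (x - y) ^ 2) * (1 / (c ^ 2 * t₀ ^ 2) + 1 / (c * t₀)) := by
      refine (abs_sub _ _).trans ?_
      rw [abs_of_nonneg (by positivity), abs_of_nonneg (by positivity)]
      have hts : t₀ ^ 2 ≤ 4 * s ^ 2 := by nlinarith
      have hts2 : c ^ 2 * t₀ ^ 2 ≤ 4 * c ^ 2 * s ^ 2 := by
        nlinarith [mul_le_mul_of_nonneg_left hts (sq_nonneg c)]
      have e1 : (x - y) ^ 2 / (4 * c ^ 2 * s ^ 2) ≤ (x - y) ^ 2 / (c ^ 2 * t₀ ^ 2) :=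
        div_le_div_of_nonneg_left (sq_nonneg _) (by positivity) hts2
      have e2 : 1 / (2 * c * s) ≤ 1 / (c * t₀) :=
        one_div_le_one_div_of_le (by positivity)
          (by nlinarith [mul_pos hc (show (0:ℝ) < 2 * s - t₀ by linarith)])
      have h3 : (0 : ℝ) ≤ (x - y) ^ 2 / (c * t₀) := by positivity
      have h4 : (0 : ℝ) ≤ 1 / (c ^ 2 * t₀ ^ 2) := by positivity
      have expand : (1 + (x - y) ^ 2) * (1 / (c ^ 2 * t₀ ^ 2) + 1 / (c * t₀))
          = 1 / (c ^ 2 * t₀ ^ 2) + 1 / (c * t₀) + (x - y) ^ 2 / (c ^ 2 * t₀ ^ 2)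
            + (x - y) ^ 2 / (c * t₀) := by
        field_simp
        ring
      rw [expand]
      linarith
    rw [h1]
    calc |f y| * (c * ((4 * π * c * s) ^ (-(1 : ℝ) / 2) * Real.exp (-(x - y) ^ 2 / (4 * c * s))
          * |(x - y) ^ 2 / (4 * c ^ 2 * s ^ 2) - 1 / (2 * c * s)|))
        ≤ C * (c * ((2 * π * c * t₀) ^ (-(1 : ℝ) / 2)
            * Real.exp (-(1 / (6 * c * t₀)) * (x - y) ^ 2)
            * ((1 + (x - y) ^ 2) * (1 / (c ^ 2 * t₀ ^ 2) + 1 / (c * t₀))))) := by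
          gcongr
          · exact hC y
      _ = (C * (c * ((2 * π * c * t₀) ^ (-(1 : ℝ) / 2)
            * (1 / (c ^ 2 * t₀ ^ 2) + 1 / (c * t₀)))))
          * ((1 + (x - y) ^ 2) * Real.exp (-(1 / (6 * c * t₀)) * (x - y) ^ 2)) := by ring
  · -- differentiability
    have hs' : t₀ / 2 < s ∧ s < 3 * t₀ / 2 := by
      rw [Metric.mem_ball, Real.dist_eq] at hs
      constructor <;> nlinarith [abs_lt.mp hs]
    have hs0 : 0 < s := by linarith [hs'.1]
    exact (hasDerivAt_hK_t hc hs0 (x - y)).const_mul (f y)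

end main

/-- The heat evolution of a bounded continuous function solves the heat
equation `∂Φ/∂t = c·∂²Φ/∂x²` for `t > 0`. -/
theorem heatEvol_solves_heat_equation
    (c : ℝ) (hc : 0 < c) (f : ℝ → ℝ) (hfc : Continuous f)
    (hfb : ∃ C, ∀ x, |f x| ≤ C) :
    ∀ t : ℝ, 0 < t → ∀ x : ℝ,
      DifferentiableAt ℝ (fun s => heatEvol c f s x) t ∧
      DifferentiableAt ℝ (fun y => heatEvol c f t y) x ∧
      DifferentiableAt ℝ (deriv (fun y => heatEvol c f t y)) x ∧
      deriv (fun s => heatEvol c f s x) t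
        = c * deriv (deriv (fun y => heatEvol c f t y)) x := by
  obtain ⟨C, hC⟩ := hfb
  intro t ht x
  have hx1 : ∀ x' : ℝ, HasDerivAt (fun y => heatEvol c f t y)
      (∫ y : ℝ, f y * hK1 c t (x' - y)) x' := fun x' =>
    (hasDerivAt_int_x hc ht hfc hC x').2
  have hderiv1 : deriv (fun y => heatEvol c f t y)
      = fun x' => ∫ y : ℝ, f y * hK1 c t (x' - y) :=
    funext fun x' => (hx1 x').deriv
  have h2 : HasDerivAt (fun x' => ∫ y : ℝ, f y * hK1 c t (x' - y))
      (∫ y : ℝ, f y * hK2 c t (x - y)) x := hasDerivAt_int_xx hc ht hfc hC x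
  have h3 : HasDerivAt (fun s => heatEvol c f s x)
      (∫ y : ℝ, f y * (c * hK2 c t (x - y))) t := hasDerivAt_int_t hc ht hfc hC x
  refine ⟨h3.differentiableAt, (hx1 x).differentiableAt, ?_, ?_⟩
  · rw [hderiv1]
    exact h2.differentiableAt
  · rw [h3.deriv, hderiv1, h2.deriv]
    rw [show (fun y => f y * (c * hK2 c t (x - y)))
        = fun y => c * (f y * hK2 c t (x - y)) from funext fun y => by ring]
    exact MeasureTheory.integral_const_mul c _
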